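/- Let R be a commutative ring with 1 and τ a symmetric relation on R^#. A non-unit a ∈ R is τ-irreducible (i.e., every τ-factorization a = λa₁⋯aₙ has a ∼ aᵢ for some i, where ∼ means generating the same principal ideal) if and only if every τ-U-factorization of a has exactly one essential divisor. -/

import Mathlib

/-- `x` is a nonzero nonunit, i.e. an element of `R^#`. -/
def NNU {R : Type*} [CommRing R] (x : R) : Prop := x ≠ 0 ∧ ¬ IsUnit x

/-- `R` is présimplifiable: `x = x*y` implies `x = 0` or `y` is a unit. -/
def Presimplifiable (R : Type*) [CommRing R] : Prop :=
  ∀ x y : R, x = x * y → x = 0 ∨ IsUnit y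

/-- `R` is a strongly associate ring: `(a) = (b)` implies `a = u*b` for some unit `u`. -/
def StronglyAssociateRing (R : Type*) [CommRing R] : Prop :=
  ∀ a b : R, Ideal.span ({a} : Set R) = Ideal.span {b} → ∃ u : R, IsUnit u ∧ a = u * b

variable {R : Type*} [CommRing R]

/-- `a = u * ines.prod * ess.prod` is a U-factorization: the members of `ines`
(the inessential divisors) and `ess` (the essential divisors) are nonzero nonunits,
each inessential divisor `x` satisfies `(x * ess.prod) = (ess.prod)`, and omitting
any essential divisor changes the ideal generated by the product of the essential
divisors. -/
def IsUFact (a u : R) (ines ess : List R) : Prop :=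
  IsUnit u ∧ (∀ x ∈ ines, NNU x) ∧ (∀ x ∈ ess, NNU x) ∧
    a = u * ines.prod * ess.prod ∧
    (∀ x ∈ ines, Ideal.span ({x * ess.prod} : Set R) = Ideal.span ({ess.prod} : Set R)) ∧
    (∀ j < ess.length,
      Ideal.span ({ess.prod} : Set R) ≠ Ideal.span ({(ess.eraseIdx j).prod} : Set R))

/-- `a = u * l.prod` is a τ-factorization: `u` is a unit, the factors are nonzero
nonunits, and distinct factors are τ-related. -/
def IsTauFact (τ : R → R → Prop) (a u : R) (l : List R) : Prop :=
  IsUnit u ∧ (∀ x ∈ l, NNU x) ∧ a = u * l.prod ∧ l.Pairwise τ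

/-- A τ-U-factorization: a U-factorization whose underlying factorization is a
τ-factorization. -/
def IsTauUFact (τ : R → R → Prop) (a u : R) (ines ess : List R) : Prop :=
  IsUFact a u ines ess ∧ (ines ++ ess).Pairwise τ

/-- `a` is τ-irreducible: `a` is a nonunit and every τ-factorization of `a`
contains a factor generating the same principal ideal as `a`. -/
def TauIrred (τ : R → R → Prop) (a : R) : Prop :=
  ¬ IsUnit a ∧ ∀ u l, IsTauFact τ a u l →
    ∃ b ∈ l, Ideal.span ({a} : Set R) = Ideal.span ({b} : Set R)

/-- `b` τ-divides `a`: `b` occurs as a factor in some τ-factorization of `a`. -/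
def TauDivides (τ : R → R → Prop) (b a : R) : Prop :=
  ∃ u l, IsTauFact τ a u l ∧ b ∈ l

/-- `b` is an essential divisor in some τ-U-factorization of `a`. -/
def IsEssTauUDivisor (τ : R → R → Prop) (b a : R) : Prop :=
  ∃ u ines ess, IsTauUFact τ a u ines ess ∧ b ∈ ess

/-- `R` is a τ-BFR: every nonunit has a bound on the number of factors in any
τ-factorization. -/
def TauBFR (τ : R → R → Prop) : Prop :=
  ∀ a : R, ¬ IsUnit a → ∃ N : ℕ, ∀ u l, IsTauFact τ a u l → l.length ≤ N

/-- `R` is a τ-U-BFR: every nonunit has a bound on the number of essential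
divisors in any τ-U-factorization. -/
def TauUBFR (τ : R → R → Prop) : Prop :=
  ∀ a : R, ¬ IsUnit a → ∃ N : ℕ, ∀ u ines ess, IsTauUFact τ a u ines ess → ess.length ≤ N

/-- `R` is τ-présimplifiable: the only τ-factorizations of `x` containing `x`
as a factor are the trivial ones `x = λ * x`. -/
def TauPresimplifiable (τ : R → R → Prop) : Prop :=
  ∀ (x u : R) (l : List R), IsTauFact τ x u l → x ∈ l → l = [x]

/-- `R` is τ-U-présimplifiable: every τ-U-factorization of every nonzero
nonunit has no nonunit inessential divisors. -/
def TauUPresimplifiable (τ : R → R → Prop) : Prop :=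
  ∀ a : R, a ≠ 0 → ¬ IsUnit a →
    ∀ u ines ess, IsTauUFact τ a u ines ess → ∀ x ∈ ines, IsUnit x

/-- τ is refinable: replacing a factor of a τ-factorization by one of its own
τ-factorizations again yields a τ-factorization. -/
def TauRefinable (τ : R → R → Prop) : Prop :=
  ∀ (a u b u' : R) (l₁ l₂ m : List R),
    IsTauFact τ a u (l₁ ++ b :: l₂) → IsTauFact τ b u' m →
      IsTauFact τ a (u * u') (l₁ ++ m ++ l₂)

/-- `R` is τ-U-refinable: refining an essential divisor of a τ-U-factorization by
one of its own τ-U-factorizations again yields a τ-U-factorization. -/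
def TauURefinable (τ : R → R → Prop) : Prop :=
  ∀ (a u b u' : R) (ines ines' ess' e₁ e₂ : List R),
    IsTauUFact τ a u ines (e₁ ++ b :: e₂) → IsTauUFact τ b u' ines' ess' →
      IsTauUFact τ a (u * u') (ines ++ ines') (e₁ ++ ess' ++ e₂)

/-- `R` satisfies τ-ACCP. -/
def TauACCP (τ : R → R → Prop) : Prop :=
  ¬ ∃ c : ℕ → R, (∀ i, Ideal.span ({c i} : Set R) < Ideal.span ({c (i + 1)} : Set R)) ∧
      ∀ i, TauDivides τ (c (i + 1)) (c i)

/-- `R` satisfies τ-U-ACCP. -/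
def TauUACCP (τ : R → R → Prop) : Prop :=
  ¬ ∃ c : ℕ → R, (∀ i, Ideal.span ({c i} : Set R) < Ideal.span ({c (i + 1)} : Set R)) ∧
      ∀ i, IsEssTauUDivisor τ (c (i + 1)) (c i)

/-- `a ≅ b`: very strong associates. -/
def VSAssoc (a b : R) : Prop :=
  Ideal.span ({a} : Set R) = Ideal.span ({b} : Set R) ∧
    ((a = 0 ∧ b = 0) ∨ ∀ r : R, a = r * b → IsUnit r)

/-- `a` is τ-very strongly atomic: `a ≅ a`, `a` is a nonunit, and every
τ-factorization of `a` is trivial. -/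
def TauVSAtomic (τ : R → R → Prop) (a : R) : Prop :=
  ¬ IsUnit a ∧ VSAssoc a a ∧ ∀ u l, IsTauFact τ a u l → l.length = 1

/-- Two lists agree up to rearrangement and associates. -/
def AssocPerm (l l' : List R) : Prop :=
  ∃ l'' : List R, l'.Perm l'' ∧
    List.Forall₂ (fun x y => Ideal.span ({x} : Set R) = Ideal.span ({y} : Set R)) l l''

/-- The product relation `τ_×` on a product of rings: coordinates are related
whenever both are nonunits. -/
def TauX {ι : Type*} {S : ι → Type*} [∀ i, CommRing (S i)]
    (τ : ∀ i, S i → S i → Prop) (a b : ∀ i, S i) : Prop :=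
  ∀ i, ¬ IsUnit (a i) → ¬ IsUnit (b i) → τ i (a i) (b i)



section MyHelpers

lemma spanEq_iff {a b : R} :
    Ideal.span ({a} : Set R) = Ideal.span ({b} : Set R) ↔ b ∣ a ∧ a ∣ b := by
  rw [le_antisymm_iff, Ideal.span_singleton_le_span_singleton,
    Ideal.span_singleton_le_span_singleton]

lemma span_unit_mul {u : R} (x : R) (hu : IsUnit u) :
    Ideal.span ({u * x} : Set R) = Ideal.span ({x} : Set R) := by
  obtain ⟨v, hv⟩ := hu.exists_left_inv
  refine spanEq_iff.mpr ⟨dvd_mul_left x u, ⟨v, ?_⟩⟩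
  rw [show u * x * v = v * u * x by ring, hv, one_mul]

lemma span_mul_congr (c : R) {x y : R}
    (h : Ideal.span ({x} : Set R) = Ideal.span ({y} : Set R)) :
    Ideal.span ({c * x} : Set R) = Ideal.span ({c * y} : Set R) := by
  obtain ⟨h1, h2⟩ := spanEq_iff.mp h
  exact spanEq_iff.mpr ⟨mul_dvd_mul_left c h1, mul_dvd_mul_left c h2⟩

lemma prod_mul_span {B : R} (L : List R)
    (h : ∀ x ∈ L, Ideal.span ({x * B} : Set R) = Ideal.span ({B} : Set R)) :
    Ideal.span ({L.prod * B} : Set R) = Ideal.span ({B} : Set R) := by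
  induction L with
  | nil => rw [List.prod_nil, one_mul]
  | cons x t ih =>
    have hx := (spanEq_iff.mp (h x (List.mem_cons_self))).2
    have ht := (spanEq_iff.mp (ih (fun y hy => h y (List.mem_cons_of_mem x hy)))).2
    refine spanEq_iff.mpr ⟨dvd_mul_left B _, ?_⟩
    calc (x :: t).prod * B = t.prod * (x * B) := by rw [List.prod_cons]; ring
    _ ∣ t.prod * B := mul_dvd_mul_left t.prod hx
    _ ∣ B := ht

lemma perm_getElem_eraseIdx (l : List R) (j : ℕ) (h : j < l.length) :
    l.Perm (l[j] :: l.eraseIdx j) := by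
  conv_lhs => rw [← List.take_append_drop j l, List.drop_eq_getElem_cons h]
  rw [List.eraseIdx_eq_take_drop_succ]
  exact List.perm_middle

lemma prod_eraseIdx_my (l : List R) (j : ℕ) (h : j < l.length) :
    l.prod = l[j] * (l.eraseIdx j).prod := by
  rw [(perm_getElem_eraseIdx l j h).prod_eq, List.prod_cons]

lemma exists_unit_mul {a u B I b : R} (hu : IsUnit u) (heq : a = u * I * B)
    (hIB : Ideal.span ({I * B} : Set R) = Ideal.span ({B} : Set R))
    (hb1 : Ideal.span ({b} : Set R) = Ideal.span ({B} : Set R))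
    (hb2 : Ideal.span ({b * B} : Set R) = Ideal.span ({B} : Set R)) :
    ∃ v : R, IsUnit v ∧ a = v * B := by
  obtain ⟨s, hs⟩ := (spanEq_iff.mp hb1).1
  obtain ⟨r, hr⟩ := (spanEq_iff.mp hb2).2
  obtain ⟨T, hT⟩ := (spanEq_iff.mp hIB).2
  obtain ⟨u', hu'⟩ := hu.exists_left_inv
  have hBB : B = B * B * (s * r) := by
    calc B = b * B * r := hr
    _ = (B * s) * B * r := by rw [hs]
    _ = B * B * (s * r) := by ring
  have he : (B * (s * r)) * (B * (s * r)) = B * (s * r) := by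
    calc (B * (s * r)) * (B * (s * r)) = (B * B * (s * r)) * (s * r) := by ring
    _ = B * (s * r) := by rw [← hBB]
  have heB : (B * (s * r)) * B = B := by
    calc (B * (s * r)) * B = B * B * (s * r) := by ring
    _ = B := hBB.symm
  have hITe : I * T * (B * (s * r)) = B * (s * r) := by
    calc I * T * (B * (s * r)) = (I * B * T) * (s * r) := by ring
    _ = B * (s * r) := by rw [← hT]
  refine ⟨u * I * (B * (s * r)) + (1 - B * (s * r)),
    IsUnit.of_mul_eq_one (u' * T * (B * (s * r)) + (1 - B * (s * r))) ?_, ?_⟩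
  · calc (u * I * (B * (s * r)) + (1 - B * (s * r))) *
        (u' * T * (B * (s * r)) + (1 - B * (s * r)))
        = (u' * u) * (I * T * (B * (s * r)) * (B * (s * r)))
          + (u * I + u' * T - 1) * ((B * (s * r)) - (B * (s * r)) * (B * (s * r)))
          + (1 - B * (s * r)) := by ring
    _ = 1 := by rw [hITe, hu', he]; ring
  · calc a = u * I * B := heq
    _ = (u * I) * ((B * (s * r)) * B) + B - ((B * (s * r)) * B) := by rw [heB]; ring
    _ = (u * I * (B * (s * r)) + (1 - B * (s * r))) * B := by ring

lemma keyA {a : R} (ess : List R)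
    (haB : Ideal.span ({a} : Set R) = Ideal.span ({ess.prod} : Set R))
    (hdel : ∀ j < ess.length,
      Ideal.span ({ess.prod} : Set R) ≠ Ideal.span ({(ess.eraseIdx j).prod} : Set R))
    (b : R) (hb : b ∈ ess)
    (hab : Ideal.span ({a} : Set R) = Ideal.span ({b} : Set R)) : ess.length = 1 := by
  by_contra hlen
  have h0 : ess.length ≠ 0 := by
    intro h
    rw [List.eq_nil_of_length_eq_zero h] at hb
    simp at hb
  have h2 : 2 ≤ ess.length := by omega
  obtain ⟨j, hj, hbj⟩ := List.mem_iff_getElem.mp hb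
  have hj' : (if j = 0 then 1 else 0) < ess.length := by split <;> omega
  have hjj' : j ≠ (if j = 0 then 1 else 0) := by split <;> omega
  have hbmem : b ∈ ess.eraseIdx (if j = 0 then 1 else 0) :=
    List.mem_eraseIdx_iff_getElem.mpr ⟨j, hj, hjj', hbj⟩
  have hbB : Ideal.span ({b} : Set R) = Ideal.span ({ess.prod} : Set R) := hab.symm.trans haB
  apply hdel _ hj'
  refine spanEq_iff.mpr ⟨?_, ?_⟩
  · exact (prod_eraseIdx_my ess _ hj') ▸ dvd_mul_left _ _
  · exact dvd_trans (spanEq_iff.mp hbB).1 (List.dvd_prod hbmem)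

lemma exists_ufact (τ : R → R → Prop) (hsym : Symmetric τ) {a u : R} (hu : IsUnit u) :
    ∀ n (ines ess : List R), ess.length ≤ n →
    (∀ x ∈ ines, NNU x) → (∀ x ∈ ess, NNU x) →
    a = u * ines.prod * ess.prod →
    (∀ x ∈ ines, Ideal.span ({x * ess.prod} : Set R) = Ideal.span ({ess.prod} : Set R)) →
    ((ines ++ ess).Pairwise τ) →
    ∃ ines' ess', IsTauUFact τ a u ines' ess' ∧ (∀ x ∈ ess', x ∈ ess) ∧
      Ideal.span ({ess'.prod} : Set R) = Ideal.span ({ess.prod} : Set R) := by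
  intro n
  induction n with
  | zero =>
    intro ines ess hlen hines hess heq hin hpw
    obtain rfl : ess = [] := List.eq_nil_of_length_eq_zero (Nat.le_zero.mp hlen)
    exact ⟨ines, [], ⟨⟨hu, hines, hess, heq, hin, by intro j hj; simp at hj⟩, hpw⟩,
      fun x hx => hx, rfl⟩
  | succ n IH =>
    intro ines ess hlen hines hess heq hin hpw
    by_cases hex : ∃ j, j < ess.length ∧
        Ideal.span ({ess.prod} : Set R) = Ideal.span ({(ess.eraseIdx j).prod} : Set R)
    · obtain ⟨j, hj, hsp⟩ := hex
      have hprod := prod_eraseIdx_my ess j hj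
      have hlen2 : (ess.eraseIdx j).length ≤ n := by
        have := List.length_eraseIdx_add_one hj; omega
      have hperm : ((ines ++ [ess[j]]) ++ ess.eraseIdx j).Perm (ines ++ ess) := by
        have h1 : (ess[j] :: ess.eraseIdx j).Perm ess := (perm_getElem_eraseIdx ess j hj).symm
        have h2 : (ines ++ [ess[j]]) ++ ess.eraseIdx j
            = ines ++ (ess[j] :: ess.eraseIdx j) := by simp
        rw [h2]
        exact h1.append_left ines
      obtain ⟨ines', ess', hU, hsubset, hspan⟩ := IH (ines ++ [ess[j]]) (ess.eraseIdx j) hlen2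
        (by
          intro x hx
          rcases List.mem_append.mp hx with h | h
          · exact hines x h
          · rw [List.mem_singleton.mp h]
            exact hess _ (List.getElem_mem hj))
        (fun x hx => hess x (List.eraseIdx_subset hx))
        (by rw [List.prod_append, List.prod_singleton, heq, hprod]; ring)
        (by
          intro x hx
          rcases List.mem_append.mp hx with h | h
          · exact ((span_mul_congr x hsp).symm.trans (hin x h)).trans hsp
          · rw [List.mem_singleton.mp h, ← hprod]
            exact hsp)
        ((hperm.pairwise_iff (fun {x y} hxy => hsym hxy)).mpr hpw)
      exact ⟨ines', ess', hU,
        fun x hx => List.eraseIdx_subset (hsubset x hx), hspan.trans hsp.symm⟩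
    · push_neg at hex
      exact ⟨ines, ess, ⟨⟨hu, hines, hess, heq, hin, hex⟩, hpw⟩, fun x hx => hx, rfl⟩

end MyHelpers

/-- A nonunit is τ-irreducible iff every τ-U-factorization of it has exactly one
essential divisor. -/
theorem stmt2 {R : Type*} [CommRing R] (τ : R → R → Prop) (hsym : Symmetric τ)
    (hsub : ∀ x y : R, τ x y → NNU x ∧ NNU y) (a : R) (ha : ¬ IsUnit a) :
    (∀ u l, IsTauFact τ a u l →
        ∃ b ∈ l, Ideal.span ({a} : Set R) = Ideal.span ({b} : Set R)) ↔
      (∀ u ines ess, IsTauUFact τ a u ines ess → ess.length = 1) := by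
  constructor
  · -- forward direction
    intro H u ines ess hU
    obtain ⟨⟨hu, hines, hess, heq, hinC, hdel⟩, hpw⟩ := hU
    have hIB := prod_mul_span ines hinC
    have haB : Ideal.span ({a} : Set R) = Ideal.span ({ess.prod} : Set R) := by
      rw [heq, mul_assoc, span_unit_mul _ hu]
      exact hIB
    have hTfull : IsTauFact τ a u (ines ++ ess) := by
      refine ⟨hu, ?_, ?_, hpw⟩
      · intro x hx
        rcases List.mem_append.mp hx with h | h
        exacts [hines x h, hess x h]
      · rw [List.prod_append, ← mul_assoc]
        exact heq
    obtain ⟨b, hb, hab⟩ := H u _ hTfull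
    rcases List.mem_append.mp hb with hbi | hbe
    · have hbB : Ideal.span ({b} : Set R) = Ideal.span ({ess.prod} : Set R) :=
        hab.symm.trans haB
      obtain ⟨v, hv, hva⟩ := exists_unit_mul hu heq hIB hbB (hinC b hbi)
      have hessPw : ess.Pairwise τ := (List.pairwise_append.mp hpw).2.1
      obtain ⟨b', hb', hab'⟩ := H v ess ⟨hv, hess, hva, hessPw⟩
      exact keyA ess haB hdel b' hb' hab'
    · exact keyA ess haB hdel b hbe hab
  · -- reverse direction
    intro H2 u l hTf
    obtain ⟨hu, hnnu, heq, hpw⟩ := hTf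
    obtain ⟨ines', ess', hU, hsubset, hspan⟩ := exists_ufact (a := a) τ hsym hu l.length [] l le_rfl
      (by intro x hx; simp at hx) hnnu
      (by rw [List.prod_nil, mul_one]; exact heq)
      (by intro x hx; simp at hx)
      (by simpa using hpw)
    have h1 := H2 u ines' ess' hU
    obtain ⟨c, rfl⟩ := List.length_eq_one_iff.mp h1
    obtain ⟨⟨hu', hi', he', heq', hin', _⟩, _⟩ := hU
    refine ⟨c, hsubset c (List.mem_singleton_self c), ?_⟩
    have hfin : Ideal.span ({a} : Set R) = Ideal.span ({List.prod [c]} : Set R) := by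
      rw [heq', mul_assoc, span_unit_mul _ hu']
      exact prod_mul_span ines' hin'
    simpa using hfin
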